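/- Let C = {x ∈ Q^n | A x ≤ 0} be a pointed polyhedral cone and r ∈ C a nonzero ray. Then r is an extreme ray of C if and only if for every ray r' ∈ C with ζ(r) ⊆ ζ(r'), the vector r' is a nonnegative scalar multiple of r. -/

import Mathlib

open Matrix

/-- The minimal face of the cone `{x | A x ≤ 0}` containing the ray `r`. -/
def minimalFace {m n : ℕ} (A : Matrix (Fin m) (Fin n) ℚ) (r : Fin n → ℚ) :
    Set (Fin n → ℚ) :=
  {x | A.mulVec x ≤ 0 ∧ ∀ i, A.mulVec r i = 0 → A.mulVec x i = 0}

/-- `r` is an extreme ray of the cone `{x | A x ≤ 0}`: it is a nonzero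
element of the cone whose minimal face is one-dimensional. -/
def IsExtremeRay {m n : ℕ} (A : Matrix (Fin m) (Fin n) ℚ) (r : Fin n → ℚ) : Prop :=
  r ≠ 0 ∧ A.mulVec r ≤ 0 ∧
    Module.finrank ℚ (Submodule.span ℚ (minimalFace A r)) = 1

lemma mulVec_inj_of_rank {m n : ℕ} (A : Matrix (Fin m) (Fin n) ℚ)
    (hpointed : A.rank = n) : Function.Injective A.mulVec := by
  have h := LinearMap.finrank_range_add_finrank_ker A.mulVecLin
  rw [Matrix.rank] at hpointed
  rw [hpointed, Module.finrank_fin_fun] at h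
  have hker : Module.finrank ℚ (LinearMap.ker A.mulVecLin) = 0 := by omega
  have hbot : LinearMap.ker A.mulVecLin = ⊥ := Submodule.finrank_eq_zero.mp hker
  have := LinearMap.ker_eq_bot.mp hbot
  exact this

/-- Combinatorial test for extreme rays: a nonzero ray `r` of the pointed
cone `{x | A x ≤ 0}` is extreme iff every ray `r'` of the cone with
`ζ(r) ⊆ ζ(r')` is a nonnegative multiple of `r`. -/
theorem combinatorial_test_extreme_ray (m n : ℕ) (A : Matrix (Fin m) (Fin n) ℚ)
    (hpointed : A.rank = n) (r : Fin n → ℚ) (hrC : A.mulVec r ≤ 0) (hr0 : r ≠ 0) :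
    IsExtremeRay A r ↔
      ∀ r' : Fin n → ℚ, A.mulVec r' ≤ 0 →
        (∀ i, A.mulVec r i = 0 → A.mulVec r' i = 0) →
          ∃ lam : ℚ, 0 ≤ lam ∧ r' = lam • r := by
  have hinj := mulVec_inj_of_rank A hpointed
  have hrF : r ∈ minimalFace A r := ⟨hrC, fun i h => h⟩
  constructor
  · rintro ⟨-, -, hdim⟩ r' hr'C hr'z
    -- span {r} = span (minimalFace A r)
    have hle : Submodule.span ℚ {r} ≤ Submodule.span ℚ (minimalFace A r) := by
      apply Submodule.span_mono
      simpa using hrF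
    have heq : Submodule.span ℚ {r} = Submodule.span ℚ (minimalFace A r) :=
      Submodule.eq_of_le_of_finrank_le hle
        (by rw [hdim, finrank_span_singleton hr0])
    have hr'F : r' ∈ minimalFace A r := ⟨hr'C, hr'z⟩
    have : r' ∈ Submodule.span ℚ {r} := by
      rw [heq]; exact Submodule.subset_span hr'F
    obtain ⟨lam, hlam⟩ := Submodule.mem_span_singleton.mp this
    refine ⟨lam, ?_, hlam.symm⟩
    by_contra hneg
    push_neg at hneg
    have hAr0 : A.mulVec r = 0 := by
      funext i
      have h1 : A.mulVec r i ≤ 0 := hrC i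
      have h2 : A.mulVec r' i ≤ 0 := hr'C i
      have h3 : A.mulVec r' i = lam * A.mulVec r i := by
        rw [← hlam, Matrix.mulVec_smul]; rfl
      have : lam * A.mulVec r i ≤ 0 := h3 ▸ h2
      simp only [Pi.zero_apply]
      nlinarith
    exact hr0 (hinj (by simpa using hAr0))
  · intro h
    refine ⟨hr0, hrC, ?_⟩
    have hsub : minimalFace A r ⊆ (Submodule.span ℚ {r} : Submodule ℚ (Fin n → ℚ)) := by
      rintro x ⟨hxC, hxz⟩
      obtain ⟨lam, -, hlam⟩ := h x hxC hxz
      exact Submodule.mem_span_singleton.mpr ⟨lam, hlam.symm⟩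
    have heq : Submodule.span ℚ (minimalFace A r) = Submodule.span ℚ {r} :=
      le_antisymm (Submodule.span_le.mpr hsub)
        (Submodule.span_mono (by simpa using hrF))
    rw [heq, finrank_span_singleton hr0]
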